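/- Let $n\ge 1$, $N=2^n$, and let $\xi_s = \xi_{\min} + s\,\Delta\xi$ for $s=0,\dots,N-1$ (an arithmetic progression). Define the Walsh--Hadamard coefficients $c_j := \frac{1}{N}\sum_{s=0}^{N-1}(-1)^{j\cdot s}\,\xi_s$. Then $c_0 = \xi_{\min} + \Delta\xi\,(2^n-1)/2$; $c_j = -\Delta\xi\,2^{i-1}$ if $j = 2^i$ for some $i\in\{0,\dots,n-1\}$; and $c_j = 0$ whenever the Hamming weight of $j$ is at least 2. -/

import Mathlib

/-- Bitwise inner product (number of common set bits among the low `n` bits). -/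
def bip (n j s : ℕ) : ℕ :=
  ∑ i ∈ Finset.range n, if j.testBit i ∧ s.testBit i then 1 else 0

/-- Hamming weight of the low `n` bits of `j`. -/
def hw (n j : ℕ) : ℕ :=
  ∑ i ∈ Finset.range n, if j.testBit i then 1 else 0

lemma hw_succ (n j : ℕ) :
    hw (n + 1) j = hw n j + (if j.testBit n then 1 else 0) :=
  Finset.sum_range_succ _ _

lemma hw_eq_zero_mod {n j : ℕ} (h : hw n j = 0) : j % 2 ^ n = 0 := by
  have hbit : ∀ i ∈ Finset.range n, (if j.testBit i then (1:ℕ) else 0) = 0 :=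
    (Finset.sum_eq_zero_iff).mp h
  apply Nat.eq_of_testBit_eq
  intro i
  rw [Nat.testBit_mod_two_pow, Nat.zero_testBit]
  by_cases hi : i < n
  · have := hbit i (Finset.mem_range.mpr hi)
    by_cases hb : j.testBit i <;> simp [hb] at this ⊢
  · simp [hi]

lemma testBit_two_pow_add_self {n t : ℕ} (ht : t < 2 ^ n) :
    (2 ^ n + t).testBit n = true := by
  rw [Nat.testBit_eq_decide_div_mod_eq]
  have h1 : (2 ^ n + t) / 2 ^ n = 1 := by
    rw [add_comm, Nat.add_div_right _ (Nat.pow_pos (n := n) (by norm_num)),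
      Nat.div_eq_of_lt ht]
  simp [h1]

lemma mod_two_pow_succ (n j : ℕ) :
    j % 2 ^ (n + 1) = j % 2 ^ n + 2 ^ n * (if j.testBit n then 1 else 0) := by
  rw [pow_succ, Nat.mod_mul]
  congr 1
  have := Nat.testBit_eq_decide_div_mod_eq (i := n) (x := j)
  have h2 : j / 2 ^ n % 2 < 2 := Nat.mod_lt _ (by norm_num)
  by_cases hb : j.testBit n <;> simp [hb] at this ⊢ <;> omega

/-- Key computation of the two character sums. -/
lemma key (n j : ℕ) :
    (∑ s ∈ Finset.range (2 ^ n), ((-1:ℝ) ^ bip n j s)) =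
      (if hw n j = 0 then (2:ℝ) ^ n else 0) ∧
    (∑ s ∈ Finset.range (2 ^ n), ((-1:ℝ) ^ bip n j s) * (s:ℝ)) =
      (if hw n j = 0 then (2:ℝ) ^ n * ((2:ℝ) ^ n - 1) / 2
       else if hw n j = 1 then -((2:ℝ) ^ n * ((j % 2 ^ n : ℕ) : ℝ)) / 2 else 0) := by
  induction n with
  | zero => simp [bip, hw]
  | succ n ih =>
    obtain ⟨ih0, ih1⟩ := ih
    have hsplit : (2:ℕ) ^ (n + 1) = 2 ^ n + 2 ^ n := by ring
    have hb1 : ∀ s ∈ Finset.range (2 ^ n), bip (n + 1) j s = bip n j s := by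
      intro s hs
      have hs' : s.testBit n = false :=
        Nat.testBit_lt_two_pow (Finset.mem_range.mp hs)
      rw [bip, Finset.sum_range_succ, ← bip, hs']
      simp
    have hb2 : ∀ t ∈ Finset.range (2 ^ n),
        bip (n + 1) j (2 ^ n + t) = bip n j t + (if j.testBit n then 1 else 0) := by
      intro t ht
      have ht' := Finset.mem_range.mp ht
      rw [bip, Finset.sum_range_succ, testBit_two_pow_add_self ht']
      congr 1
      · rw [bip]
        exact Finset.sum_congr rfl fun i hi => by
          rw [Nat.testBit_two_pow_add_gt (Finset.mem_range.mp hi)]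
      · simp
    set ε : ℝ := if j.testBit n then -1 else 1 with hε
    set S0 : ℝ := ∑ s ∈ Finset.range (2 ^ n), ((-1:ℝ) ^ bip n j s) with hS0
    set S1 : ℝ := ∑ s ∈ Finset.range (2 ^ n), ((-1:ℝ) ^ bip n j s) * (s:ℝ) with hS1
    have hpow : ∀ t ∈ Finset.range (2 ^ n),
        ((-1:ℝ) ^ bip (n + 1) j (2 ^ n + t)) = ε * (-1:ℝ) ^ bip n j t := by
      intro t ht
      rw [hb2 t ht, pow_add]
      by_cases hbn : j.testBit n <;> simp [hε, hbn] <;> ring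
    have e0 : (∑ s ∈ Finset.range (2 ^ (n + 1)), ((-1:ℝ) ^ bip (n + 1) j s)) =
        S0 + ε * S0 := by
      rw [hsplit, Finset.sum_range_add]
      congr 1
      · exact Finset.sum_congr rfl fun s hs => by rw [hb1 s hs]
      · rw [hS0, Finset.mul_sum]
        exact Finset.sum_congr rfl fun t ht => hpow t ht
    have e1 : (∑ s ∈ Finset.range (2 ^ (n + 1)), ((-1:ℝ) ^ bip (n + 1) j s) * (s:ℝ)) =
        S1 + ε * (S1 + 2 ^ n * S0) := by
      rw [hsplit, Finset.sum_range_add]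
      congr 1
      · exact Finset.sum_congr rfl fun s hs => by rw [hb1 s hs]
      · have hrepr : ε * (S1 + 2 ^ n * S0) =
            ∑ t ∈ Finset.range (2 ^ n), ε * ((-1:ℝ) ^ bip n j t) * ((2:ℝ) ^ n + t) := by
          simp only [hS0, hS1, Finset.mul_sum, mul_add, ← Finset.sum_add_distrib]
          exact Finset.sum_congr rfl fun t _ => by ring
        rw [hrepr]
        refine Finset.sum_congr rfl fun t ht => ?_
        rw [hpow t ht]
        push_cast
        ring
    have hhw := hw_succ n j
    have hmod := mod_two_pow_succ n j
    by_cases hbn : j.testBit n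
    · -- bit n set
      simp only [hbn, if_true] at hhw hmod
      have hεv : ε = -1 := by simp [hε, hbn]
      by_cases h0 : hw n j = 0
      · have hm0 : j % 2 ^ n = 0 := hw_eq_zero_mod h0
        rw [e0, e1, ih0, ih1, hεv]
        simp only [h0, if_true, hhw, hmod, hm0]
        norm_num
        push_cast
        ring
      · rw [e0, e1, ih0, ih1, hεv, hhw]
        have h2 : hw n j + 1 ≠ 0 := by omega
        have h3 : hw n j + 1 ≠ 1 := by omega
        by_cases h1 : hw n j = 1 <;>
          simp only [h0, h1, h2, h3, if_true, if_false] <;>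
          norm_num <;> ring
    · -- bit n clear
      simp [hbn] at hhw hmod
      have hεv : ε = 1 := by simp [hε, hbn]
      rw [e0, e1, ih0, ih1, hεv]
      try simp only [Nat.mul_zero, Nat.add_zero, mul_zero, add_zero] at hhw hmod
      rw [hhw, hmod]
      try simp only [Nat.add_zero, add_zero]
      by_cases h0 : hw n j = 0
      · simp only [h0, if_true]
        constructor
        · ring
        · push_cast; ring
      · by_cases h1 : hw n j = 1 <;> simp [h0, h1] <;> push_cast <;> ring

lemma sum_split (n j : ℕ) (ξmin Δξ : ℝ) :
    (∑ s ∈ Finset.range (2 ^ n), (-1 : ℝ) ^ bip n j s * (ξmin + s * Δξ)) =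
      ξmin * (∑ s ∈ Finset.range (2 ^ n), ((-1:ℝ) ^ bip n j s)) +
      Δξ * (∑ s ∈ Finset.range (2 ^ n), ((-1:ℝ) ^ bip n j s) * (s:ℝ)) := by
  rw [Finset.mul_sum, Finset.mul_sum, ← Finset.sum_add_distrib]
  exact Finset.sum_congr rfl fun s _ => by ring

/-- Walsh–Hadamard coefficients of an arithmetic progression `ξ_s = ξ_min + s Δξ`:
`c_0 = ξ_min + Δξ (2^n - 1)/2`, `c_{2^i} = -Δξ 2^i / 2`, and `c_j = 0` when `w(j) ≥ 2`. -/
theorem walsh_coeff_arithmetic (n : ℕ) (hn : 1 ≤ n) (ξmin Δξ : ℝ) (c : ℕ → ℝ)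
    (hc : ∀ j, c j = (1 / (2 ^ n : ℝ)) *
        ∑ s ∈ Finset.range (2 ^ n), (-1 : ℝ) ^ bip n j s * (ξmin + s * Δξ)) :
    c 0 = ξmin + Δξ * ((2 ^ n : ℝ) - 1) / 2 ∧
    (∀ i < n, c (2 ^ i) = -(Δξ * (2 : ℝ) ^ i / 2)) ∧
    (∀ j < 2 ^ n, 2 ≤ hw n j → c j = 0) := by
  have hpow : (0:ℝ) < (2:ℝ) ^ n := by positivity
  refine ⟨?_, ?_, ?_⟩
  · have hw0 : hw n 0 = 0 := by simp [hw, Nat.zero_testBit]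
    obtain ⟨k0, k1⟩ := key n 0
    rw [hc 0, sum_split, k0, k1, hw0]
    simp only [if_true]
    field_simp
  · intro i hi
    have hwi : hw n (2 ^ i) = 1 := by
      rw [hw]
      have : ∀ k ∈ Finset.range n,
          (if (2 ^ i).testBit k then (1:ℕ) else 0) = if i = k then 1 else 0 := by
        intro k _
        by_cases h : i = k
        · subst h; simp [Nat.testBit_two_pow_self]
        · simp [Nat.testBit_two_pow_of_ne h, h]
      rw [Finset.sum_congr rfl this, Finset.sum_ite_eq]
      simp [hi]
    have hmi : 2 ^ i % 2 ^ n = 2 ^ i :=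
      Nat.mod_eq_of_lt (Nat.pow_lt_pow_right (by norm_num) hi)
    obtain ⟨k0, k1⟩ := key n (2 ^ i)
    rw [hc (2 ^ i), sum_split, k0, k1, hwi]
    simp only [hmi]
    norm_num
    push_cast
    field_simp
  · intro j _ hj
    have h0 : hw n j ≠ 0 := by omega
    have h1 : hw n j ≠ 1 := by omega
    obtain ⟨k0, k1⟩ := key n j
    rw [hc j, sum_split, k0, k1]
    simp [h0, h1]
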